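/- For every q ∈ (1/2, 1], there exists a unique ξ* > 0 such that f(ξ*, q) = 2, where f(ξ,q) = ξ·((1−q)Q(ξ,1) + q·Q(ξ,2)) / ((1−q)Q(ξ,2) + 2q·Q(ξ,3)); moreover f(ξ,q) < 2 for ξ ∈ (0, ξ*) and f(ξ,q) > 2 for ξ > ξ*. -/

import Mathlib

/-- `Q x y = e^{-x} ∑_{j ≥ y} x^j / j!`, the upper tail of a Poisson
distribution with mean `x`. -/
noncomputable def Q (x : ℝ) (y : ℕ) : ℝ :=
  Real.exp (-x) * ∑' j : ℕ, if y ≤ j then x ^ j / (Nat.factorial j) else 0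

noncomputable def f (ξ q : ℝ) : ℝ :=
  ξ * ((1 - q) * Q ξ 1 + q * Q ξ 2) / ((1 - q) * Q ξ 2 + 2 * q * Q ξ 3)

/-! ### Auxiliary material -/

lemma exp_tsum (x : ℝ) : Real.exp x = ∑' n : ℕ, x ^ n / n.factorial := by
  rw [Real.exp_eq_exp_ℝ, NormedSpace.exp_eq_tsum_div]

lemma summable_ite (x : ℝ) (y : ℕ) :
    Summable (fun j : ℕ => if y ≤ j then x ^ j / j.factorial else 0) := by
  have h := (Real.summable_pow_div_factorial x).indicator {j | y ≤ j}
  refine h.congr fun j => ?_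
  simp [Set.indicator_apply, Set.mem_setOf_eq]

lemma Q_eq (x : ℝ) (y : ℕ) :
    Q x y = Real.exp (-x) * (Real.exp x - ∑ j ∈ Finset.range y, x ^ j / j.factorial) := by
  unfold Q
  congr 1
  have h1 : Summable (fun j : ℕ => if y ≤ j then x ^ j / j.factorial else 0) := summable_ite x y
  have h2 : Summable (fun j : ℕ => if j < y then x ^ j / j.factorial else 0) := by
    apply summable_of_ne_finset_zero (s := Finset.range y)
    intro j hj
    simp only [Finset.mem_range, not_lt] at hj
    simp [Nat.not_lt.mpr hj]
  have h3 : (fun j : ℕ => x ^ j / j.factorial) =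
      (fun j : ℕ => if y ≤ j then x ^ j / j.factorial else 0) +
      (fun j : ℕ => if j < y then x ^ j / j.factorial else 0) := by
    funext j
    rcases le_or_gt y j with h | h
    · simp [h, Nat.not_lt.mpr h]
    · simp [h, Nat.not_le.mpr h]
  have h4 : Real.exp x = (∑' j : ℕ, if y ≤ j then x ^ j / j.factorial else 0) +
      ∑' j : ℕ, if j < y then x ^ j / j.factorial else 0 := by
    rw [exp_tsum, h3]
    exact Summable.tsum_add h1 h2
  have h5 : (∑' j : ℕ, if j < y then x ^ j / j.factorial else 0) =
      ∑ j ∈ Finset.range y, x ^ j / j.factorial := by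
    rw [tsum_eq_sum (s := Finset.range y)]
    · apply Finset.sum_congr rfl
      intro j hj
      simp [Finset.mem_range.mp hj]
    · intro j hj
      simp only [Finset.mem_range, not_lt] at hj
      simp [Nat.not_lt.mpr hj]
  linarith [h4, h5]

lemma Q_pos (x : ℝ) (hx : 0 < x) (y : ℕ) : 0 < Q x y := by
  unfold Q
  apply mul_pos (Real.exp_pos _)
  apply Summable.tsum_pos (summable_ite x y) _ y
  · simp [le_refl]
    positivity
  · intro j
    split
    · positivity
    · exact le_refl 0

lemma Q1_eq (x : ℝ) : Q x 1 = Real.exp (-x) * (Real.exp x - 1) := by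
  rw [Q_eq]; norm_num [Finset.sum_range_succ]

lemma Q2_eq (x : ℝ) : Q x 2 = Real.exp (-x) * (Real.exp x - (1 + x)) := by
  rw [Q_eq]; norm_num [Finset.sum_range_succ]

lemma Q3_eq (x : ℝ) : Q x 3 = Real.exp (-x) * (Real.exp x - (1 + x + x^2/2)) := by
  rw [Q_eq]; norm_num [Finset.sum_range_succ]

/-- The auxiliary function whose sign governs `f ξ q - 2`. -/
noncomputable def g (q ξ : ℝ) : ℝ :=
  Real.exp ξ * (ξ - 2 - 2*q) + q*ξ^2 + (1+2*q)*ξ + 2 + 2*q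
noncomputable def g1 (q ξ : ℝ) : ℝ := Real.exp ξ * (ξ - 1 - 2*q) + 2*q*ξ + 1 + 2*q
noncomputable def g2 (q ξ : ℝ) : ℝ := Real.exp ξ * (ξ - 2*q) + 2*q
noncomputable def g3 (q ξ : ℝ) : ℝ := Real.exp ξ * (ξ + 1 - 2*q)

lemma hasDerivAt_g (q x : ℝ) : HasDerivAt (g q) (g1 q x) x := by
  have h := ((((Real.hasDerivAt_exp x).mul (((hasDerivAt_id x).sub_const 2).sub_const
      (2*q))).add (((hasDerivAt_pow 2 x).const_mul q).add
      ((hasDerivAt_id x).const_mul (1+2*q)))).add_const 2).add_const (2*q)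
  have hfun : g q = fun ξ : ℝ => Real.exp ξ * (id ξ - 2 - 2*q) + (q*ξ^2 + (1+2*q)*id ξ) + 2 + 2*q := by
    funext ξ; unfold g; simp only [id]; ring
  rw [hfun]
  exact h.congr_deriv (by unfold g1; simp only [id]; push_cast; ring)

lemma hasDerivAt_g1 (q x : ℝ) : HasDerivAt (g1 q) (g2 q x) x := by
  have h := ((((Real.hasDerivAt_exp x).mul (((hasDerivAt_id x).sub_const 1).sub_const
      (2*q))).add ((hasDerivAt_id x).const_mul (2*q))).add_const 1).add_const (2*q)
  have hfun : g1 q = fun ξ : ℝ => Real.exp ξ * (id ξ - 1 - 2*q) + 2*q*id ξ + 1 + 2*q := by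
    funext ξ; unfold g1; simp only [id]
  rw [hfun]
  exact h.congr_deriv (by unfold g2; simp only [id]; ring)

lemma hasDerivAt_g2 (q x : ℝ) : HasDerivAt (g2 q) (g3 q x) x := by
  have h := (((Real.hasDerivAt_exp x).mul ((hasDerivAt_id x).sub_const (2*q)))).add_const (2*q)
  have hfun : g2 q = fun ξ : ℝ => Real.exp ξ * (id ξ - 2*q) + 2*q := by
    funext ξ; unfold g2; simp only [id]
  rw [hfun]
  exact h.congr_deriv (by unfold g3; simp only [id]; ring)

lemma tendsto_aux (C : ℝ) : Filter.Tendsto (fun x : ℝ => x - C) Filter.atTop Filter.atTop := by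
  simp only [sub_eq_add_neg]
  exact Filter.tendsto_atTop_add_const_right _ (-C) Filter.tendsto_id

lemma g2_top (q : ℝ) (hq : 0 < q) : Filter.Tendsto (g2 q) Filter.atTop Filter.atTop := by
  apply Filter.tendsto_atTop_mono' _ _ (tendsto_aux (2*q))
  filter_upwards [Filter.eventually_ge_atTop (2*q)] with x hx
  have h1 : (1:ℝ) ≤ Real.exp x := Real.one_le_exp (by linarith)
  unfold g2; nlinarith

lemma g1_top (q : ℝ) (hq : 0 < q) : Filter.Tendsto (g1 q) Filter.atTop Filter.atTop := by
  apply Filter.tendsto_atTop_mono' _ _ (tendsto_aux (1+2*q))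
  filter_upwards [Filter.eventually_ge_atTop (1+2*q)] with x hx
  have h1 : (1:ℝ) ≤ Real.exp x := Real.one_le_exp (by linarith)
  unfold g1; nlinarith

lemma g_top (q : ℝ) (hq : 0 < q) : Filter.Tendsto (g q) Filter.atTop Filter.atTop := by
  apply Filter.tendsto_atTop_mono' _ _ (tendsto_aux (2+2*q))
  filter_upwards [Filter.eventually_ge_atTop (2+2*q)] with x hx
  have h1 : (1:ℝ) ≤ Real.exp x := Real.one_le_exp (by linarith)
  unfold g; nlinarith

/-- Generic one-crossing step lemma. -/
lemma step (F F' : ℝ → ℝ) (hd : ∀ x, HasDerivAt F (F' x) x) (hF0 : F 0 = 0)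
    (b : ℝ) (hb : 0 < b) (hneg : ∀ x, 0 < x → x < b → F' x < 0)
    (hpos : ∀ x, b < x → 0 < F' x)
    (htop : Filter.Tendsto F Filter.atTop Filter.atTop) :
    ∃ r, b < r ∧ F r = 0 ∧ (∀ x, 0 < x → x < r → F x < 0) ∧ ∀ x, r < x → 0 < F x := by
  have hcont : Continuous F := by
    apply continuous_iff_continuousAt.2
    exact fun x => (hd x).continuousAt
  have anti : StrictAntiOn F (Set.Icc 0 b) := by
    apply strictAntiOn_of_deriv_neg (convex_Icc 0 b) hcont.continuousOn
    intro x hx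
    rw [interior_Icc] at hx
    rw [(hd x).deriv]
    exact hneg x hx.1 hx.2
  have mono : StrictMonoOn F (Set.Ici b) := by
    apply strictMonoOn_of_deriv_pos (convex_Ici b) hcont.continuousOn
    intro x hx
    rw [interior_Ici] at hx
    rw [(hd x).deriv]
    exact hpos x hx
  have hFb : F b < 0 := by
    have := anti ⟨le_rfl, hb.le⟩ ⟨hb.le, le_rfl⟩ hb
    rw [hF0] at this; linarith
  obtain ⟨M, hM1, hM2⟩ := ((htop.eventually_gt_atTop 0).and (Filter.eventually_gt_atTop b)).exists
  have hIVT := intermediate_value_Ioo hM2.le hcont.continuousOn (a := b) (b := M)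
  obtain ⟨r, hr, hFr⟩ := hIVT ⟨hFb, hM1⟩
  refine ⟨r, hr.1, hFr, ?_, ?_⟩
  · intro x hx0 hxr
    rcases le_or_gt x b with h | h
    · have := anti ⟨le_rfl, hb.le⟩ ⟨hx0.le, h⟩ hx0
      rw [hF0] at this; linarith
    · have := mono (Set.mem_Ici.2 h.le) (Set.mem_Ici.2 hr.1.le) hxr
      rw [hFr] at this; linarith
  · intro x hrx
    have := mono (Set.mem_Ici.2 hr.1.le) (Set.mem_Ici.2 (hr.1.le.trans hrx.le)) hrx
    rw [hFr] at this; linarith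

lemma fsign (q ξ : ℝ) (hq : 1/2 < q) (hq1 : q ≤ 1) (hξ : 0 < ξ) :
    (f ξ q < 2 ↔ g q ξ < 0) ∧ (f ξ q = 2 ↔ g q ξ = 0) ∧ (2 < f ξ q ↔ 0 < g q ξ) := by
  have hDpos : 0 < (1 - q) * Q ξ 2 + 2 * q * Q ξ 3 := by
    have h2 := Q_pos ξ hξ 2
    have h3 := Q_pos ξ hξ 3
    nlinarith
  have hDA : (1 - q) * Q ξ 2 + 2 * q * Q ξ 3 =
      Real.exp (-ξ) * ((1+q)*(Real.exp ξ-1-ξ) - q*ξ^2) := by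
    rw [Q2_eq, Q3_eq]; ring
  have hApos : 0 < (1+q)*(Real.exp ξ-1-ξ) - q*ξ^2 := by
    have h := hDpos
    rw [hDA] at h
    have he : 0 < Real.exp (-ξ) := Real.exp_pos _
    nlinarith
  have hnum : ξ * ((1 - q) * Q ξ 1 + q * Q ξ 2) =
      Real.exp (-ξ) * (ξ * (Real.exp ξ - 1 - q*ξ)) := by
    rw [Q1_eq, Q2_eq]; ring
  have hkey : f ξ q = ξ * (Real.exp ξ - 1 - q*ξ) / ((1+q)*(Real.exp ξ-1-ξ) - q*ξ^2) := by
    unfold f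
    rw [hnum, hDA, mul_div_mul_left _ _ (Real.exp_ne_zero (-ξ))]
  have hgA : g q ξ = ξ * (Real.exp ξ - 1 - q*ξ) - 2*((1+q)*(Real.exp ξ-1-ξ) - q*ξ^2) := by
    unfold g; ring
  refine ⟨?_, ?_, ?_⟩
  · rw [hkey, hgA, div_lt_iff₀ hApos]
    constructor <;> intro h <;> linarith
  · rw [hkey, hgA, div_eq_iff hApos.ne']
    constructor <;> intro h <;> linarith
  · rw [hkey, hgA, lt_div_iff₀ hApos]
    constructor <;> intro h <;> linarith

/-- For `q ∈ (1/2, 1]` there is a unique `ξ* > 0` with `f(ξ*,q) = 2`, and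
`f(ξ,q) < 2` on `(0, ξ*)` while `f(ξ,q) > 2` for `ξ > ξ*`. -/
theorem stmt13 (q : ℝ) (hq : 1 / 2 < q) (hq1 : q ≤ 1) :
    ∃! ξs : ℝ, 0 < ξs ∧ f ξs q = 2 ∧
      (∀ ξ, 0 < ξ → ξ < ξs → f ξ q < 2) ∧ (∀ ξ, ξs < ξ → 2 < f ξ q) := by
  have hq0 : 0 < q := by linarith
  -- level 2 : g2 has a single crossing at some ξ₂ > 2q-1
  obtain ⟨ξ2, hξ2b, hξ2z, hξ2neg, hξ2pos⟩ :=
    step (g2 q) (g3 q) (hasDerivAt_g2 q) (by unfold g2; simp) (2*q - 1) (by linarith)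
      (fun x hx0 hxb => by
        unfold g3
        exact mul_neg_of_pos_of_neg (Real.exp_pos x) (by linarith))
      (fun x hxb => by
        unfold g3
        exact mul_pos (Real.exp_pos x) (by linarith))
      (g2_top q hq0)
  have hξ2pos0 : 0 < ξ2 := by linarith
  -- level 1 : g1 has a single crossing at some ξ₁ > ξ₂
  obtain ⟨ξ1, hξ1b, hξ1z, hξ1neg, hξ1pos⟩ :=
    step (g1 q) (g2 q) (hasDerivAt_g1 q) (by unfold g1; simp; ring) ξ2 hξ2pos0
      hξ2neg hξ2pos (g1_top q hq0)
  have hξ1pos0 : 0 < ξ1 := by linarith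
  -- level 0 : g has a single crossing at some ξ* > ξ₁
  obtain ⟨ξs, hξsb, hξsz, hξsneg, hξspos⟩ :=
    step (g q) (g1 q) (hasDerivAt_g q) (by unfold g; simp; ring) ξ1 hξ1pos0
      hξ1neg hξ1pos (g_top q hq0)
  have hξspos0 : 0 < ξs := by linarith
  refine ⟨ξs, ⟨hξspos0, ?_, ?_, ?_⟩, ?_⟩
  · exact ((fsign q ξs hq hq1 hξspos0).2.1).2 hξsz
  · intro ξ hξ0 hξlt
    exact ((fsign q ξ hq hq1 hξ0).1).2 (hξsneg ξ hξ0 hξlt)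
  · intro ξ hξgt
    exact ((fsign q ξ hq hq1 (hξspos0.trans hξgt)).2.2).2 (hξspos ξ hξgt)
  · rintro y ⟨hy0, hyf, -, -⟩
    rcases lt_trichotomy y ξs with h | h | h
    · have := ((fsign q y hq hq1 hy0).1).2 (hξsneg y hy0 h)
      rw [hyf] at this; linarith
    · exact h
    · have := ((fsign q y hq hq1 hy0).2.2).2 (hξspos y h)
      rw [hyf] at this; linarith
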